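/- arXiv:2306.12569 — 4 statements merged into one kernel-verified Lean document; each statement's English description precedes it below -/
import Mathlib

section
/- Suppose the product formula S(t) = e^{−itF_d} ⋯ e^{−itF_1} satisfies S(t) = e^{−itH} + O(t^{p+1}) as t → 0, where H = ∑_{a=1}^d F_a with Hermitian F_a. Define G(t) = i (dS/dt) S(t)^{−1}. Then G(0) = H and the Taylor coefficients G_q of G(t) at t = 0 vanish for 1 ≤ q ≤ p−1. -/
open scoped Matrix

noncomputable section

attribute [local instance] Matrix.frobeniusNormedAddCommGroup Matrix.frobeniusNormedSpace
  Matrix.frobeniusNormedRing Matrix.frobeniusNormedAlgebra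

open Asymptotics Filter

section AuxBigO
variable {M : Type*} [NormedAddCommGroup M] [NormedSpace ℝ M]

lemma aux_abs_pow_isBigO {k m : ℕ} (hkm : k ≤ m) :
    (fun t : ℝ => |t| ^ m) =O[nhds 0] fun t : ℝ => ‖t‖ ^ k := by
  rw [Asymptotics.isBigO_iff]
  refine ⟨1, ?_⟩
  have h1 : ∀ᶠ t : ℝ in nhds 0, |t| ≤ 1 := by
    filter_upwards [Metric.ball_mem_nhds (0:ℝ) one_pos] with t ht
    simpa [Real.dist_eq] using le_of_lt (by simpa [Real.dist_eq] using ht)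
  filter_upwards [h1] with t ht
  simp only [Real.norm_eq_abs, abs_pow, abs_abs, one_mul]
  exact pow_le_pow_of_le_one (abs_nonneg t) ht hkm

lemma coeff_apply_eq_zero_of_isBigO {f : ℝ → M} {ps : FormalMultilinearSeries ℝ ℝ M}
    (hf : HasFPowerSeriesAt f ps 0) {m : ℕ}
    (hO : f =O[nhds 0] fun t : ℝ => |t| ^ m) :
    ∀ k, k < m → ∀ y : ℝ, (ps k fun _ => y) = 0 := by
  intro k
  induction k using Nat.strong_induction_on with
  | _ k ih =>
  intro hk y
  have psum_eq : ps.partialSum (k + 1) = fun y => ps k fun _ => y := by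
    funext z
    refine Finset.sum_eq_single _ (fun b hb hnb => ?_) fun hn => ?_
    · have hb' := Finset.mem_range_succ_iff.mp hb
      exact ih b (hb'.lt_of_ne hnb) (lt_of_le_of_lt hb' hk) z
    · exact absurd (Finset.self_mem_range_succ k) hn
  have h1 := hf.isBigO_sub_partialSum_pow (k + 1)
  have h2 : f =O[nhds 0] fun y : ℝ => ‖y‖ ^ (k + 1) := hO.trans (aux_abs_pow_isBigO hk)
  have h3 : (fun y : ℝ => ps k fun _ => y) =O[nhds 0] fun y : ℝ => ‖y‖ ^ (k + 1) := by
    have heq : (fun y : ℝ => ps k fun _ => y)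
        = fun y : ℝ => f (0 + y) - (f (0 + y) - ps.partialSum (k + 1) y) := by
      funext z
      rw [sub_sub_cancel, psum_eq]
    rw [heq]
    have h2' : (fun y : ℝ => f (0 + y)) =O[nhds 0] fun y : ℝ => ‖y‖ ^ (k + 1) := by
      simpa using h2
    exact h2'.sub h1
  exact h3.continuousMultilinearMap_apply_eq_zero y

lemma iteratedDeriv_eq_zero_of_isBigO [CompleteSpace M] {f : ℝ → M} (hf : AnalyticAt ℝ f 0)
    {m : ℕ} (hO : f =O[nhds 0] fun t : ℝ => |t| ^ m) :
    ∀ q, q < m → iteratedDeriv q f 0 = 0 := by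
  obtain ⟨ps, r, hball⟩ := hf
  intro q hq
  have h0 := coeff_apply_eq_zero_of_isBigO hball.hasFPowerSeriesAt hO q hq 1
  have h1 := hball.factorial_smul (1 : ℝ) q
  rw [iteratedDeriv_eq_iteratedFDeriv, ← h1, h0, smul_zero]

lemma isBigO_of_iteratedDeriv_eq_zero [CompleteSpace M] {f : ℝ → M} (hf : AnalyticAt ℝ f 0)
    {m : ℕ} (hzero : ∀ q, q < m → iteratedDeriv q f 0 = 0) :
    f =O[nhds 0] fun t : ℝ => |t| ^ m := by
  obtain ⟨ps, r, hball⟩ := hf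
  have hcoeff : ∀ k, k < m → ∀ y : ℝ, (ps k fun _ => y) = 0 := by
    intro k hk y
    have h1 := hball.factorial_smul (1 : ℝ) k
    have h2 : (k.factorial : ℕ) • (ps k fun _ => (1 : ℝ)) = 0 := by
      rw [h1, ← iteratedDeriv_eq_iteratedFDeriv, hzero k hk]
    have h3 : (ps k fun _ => (1 : ℝ)) = 0 := by
      rw [← Nat.cast_smul_eq_nsmul ℝ, smul_eq_zero] at h2
      rcases h2 with h | h
      · exact absurd h (by exact_mod_cast k.factorial_ne_zero)
      · exact h
    calc (ps k fun _ => y) = (ps k fun _ => y • (1 : ℝ)) := by simp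
      _ = (∏ _i : Fin k, y) • ps k (fun _ => (1 : ℝ)) := ContinuousMultilinearMap.map_smul_univ _ _ _
      _ = 0 := by rw [h3, smul_zero]
  have h1 := hball.hasFPowerSeriesAt.isBigO_sub_partialSum_pow m
  have h2 : ps.partialSum m = fun _ => 0 := by
    funext z
    exact Finset.sum_eq_zero fun b hb => hcoeff b (Finset.mem_range.mp hb) z
  simp only [h2, zero_add, sub_zero, Real.norm_eq_abs] at h1
  exact h1

end AuxBigO

/-- If the product formula `S(t) = e^{−itF_d}⋯e^{−itF_1}` (with Hermitian `F_a` and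
`H = ∑_a F_a`) is an order-`p` formula, i.e. `S(t) = e^{−itH} + O(t^{p+1})` as `t → 0`,
then the effective Hamiltonian `G(t) = i S'(t) S(t)⁻¹` satisfies `G(0) = H` and its Taylor
coefficients `G_q = (d^q G/dt^q)(0)/q!` vanish for `1 ≤ q ≤ p − 1`.
Here `F : Fin d → _` with `F i` playing the role of `F_{i+1}`. -/
theorem effective_hamiltonian_taylor_vanish {n d p : ℕ} (hd : 0 < d) (hp : 1 ≤ p)
    (F : Fin d → Matrix (Fin n) (Fin n) ℂ) (hF : ∀ a, (F a).IsHermitian)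
    (H : Matrix (Fin n) (Fin n) ℂ) (hH : H = ∑ a, F a)
    (S S' : ℝ → Matrix (Fin n) (Fin n) ℂ)
    (hS : ∀ t : ℝ, S t =
      ((List.ofFn fun a : Fin d =>
        NormedSpace.exp ((-(Complex.I * (t : ℂ))) • F a)).reverse).prod)
    (hderiv : ∀ t : ℝ, HasDerivAt S (S' t) t)
    (G : ℝ → Matrix (Fin n) (Fin n) ℂ)
    (hG : ∀ t : ℝ, G t = Complex.I • (S' t * (S t)⁻¹))
    (horder : ∃ C δ : ℝ, 0 < δ ∧ ∀ t : ℝ, |t| ≤ δ →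
      ‖S t - NormedSpace.exp ((-(Complex.I * (t : ℂ))) • H)‖ ≤ C * |t| ^ (p + 1)) :
    G 0 = H ∧ ∀ q : ℕ, 1 ≤ q → q ≤ p - 1 → iteratedDeriv q G 0 = 0 := by
  -- real scalar multiplication vs complex
  have hcoe : ∀ (t : ℝ) (A : Matrix (Fin n) (Fin n) ℂ), (t : ℂ) • A = t • A := fun t A => by
    rw [← Complex.coe_algebraMap, algebraMap_smul]
  have hsmul : ∀ (A : Matrix (Fin n) (Fin n) ℂ) (t : ℝ),
      (-(Complex.I * (t : ℂ))) • A = t • ((-Complex.I) • A) := by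
    intro A t
    have h1 : (-(Complex.I * (t : ℂ))) = (t : ℂ) * (-Complex.I) := by ring
    rw [h1, mul_smul, hcoe]
  -- analyticity of exponentials
  have expA : ∀ (A : Matrix (Fin n) (Fin n) ℂ),
      AnalyticOnNhd ℝ (fun s : ℝ => NormedSpace.exp (s • A)) Set.univ := by
    intro A t _
    have h1 : AnalyticAt ℂ (NormedSpace.exp) (t • A) :=
      NormedSpace.analyticAt_exp_of_mem_ball (𝕂 := ℂ) _
        (by rw [NormedSpace.expSeries_radius_eq_top]; exact edist_lt_top _ _)
    have h2 : AnalyticAt ℝ (NormedSpace.exp) (t • A) := h1.restrictScalars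
    have h3 : AnalyticAt ℝ (fun s : ℝ => s • A) t := by
      have := ((1 : ℝ →L[ℝ] ℝ).smulRight A).analyticAt t
      exact this
    have h4 := AnalyticAt.comp (g := NormedSpace.exp) (f := fun s : ℝ => s • A) (x := t) h2 h3
    simpa [Function.comp_def] using h4
  -- S as an analytic function
  have hSfun : S = fun t : ℝ =>
      ((List.ofFn fun a : Fin d =>
        NormedSpace.exp (t • ((-Complex.I) • F a))).reverse).prod := by
    funext t
    rw [hS t]
    simp only [hsmul]
  have prodA : ∀ (k : ℕ) (g : Fin k → ℝ → Matrix (Fin n) (Fin n) ℂ),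
      (∀ a, AnalyticOnNhd ℝ (g a) Set.univ) →
      AnalyticOnNhd ℝ (fun t => ((List.ofFn fun a => g a t).reverse).prod) Set.univ := by
    intro k
    induction k with
    | zero => intro g _; simpa using analyticOnNhd_const
    | succ k ih =>
      intro g hg
      have heq : (fun t => ((List.ofFn fun a => g a t).reverse).prod)
          = fun t => ((List.ofFn fun a : Fin k => g a.succ t).reverse).prod * g 0 t := by
        funext t
        simp [List.ofFn_succ, List.prod_append]
      rw [heq]
      exact (ih _ fun a => hg a.succ).mul (hg 0)
  have hSA : AnalyticOnNhd ℝ S Set.univ := by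
    rw [hSfun]
    exact prodA d _ fun a => expA ((-Complex.I) • F a)
  -- the exact exponential e
  set Bh : Matrix (Fin n) (Fin n) ℂ := (-Complex.I) • H with hBh
  set e : ℝ → Matrix (Fin n) (Fin n) ℂ := fun t => NormedSpace.exp (t • Bh) with he_def
  have heA : AnalyticOnNhd ℝ e Set.univ := expA Bh
  have he_eq : ∀ t : ℝ, NormedSpace.exp ((-(Complex.I * (t : ℂ))) • H) = e t := fun t => by
    rw [hsmul]
  have hexp_eq : (NormedSpace.exp : Matrix (Fin n) (Fin n) ℂ → Matrix (Fin n) (Fin n) ℂ)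
      = NormedSpace.exp := rfl
  have hederiv : ∀ t : ℝ, HasDerivAt e (Bh * e t) t := by
    intro t
    have h1 : HasDerivAt (fun u : ℝ => NormedSpace.exp (u • Bh))
        (Bh * NormedSpace.exp (t • Bh)) t := hasDerivAt_exp_smul_const' Bh t
    rw [hexp_eq] at h1
    exact h1
  -- derivative of S
  have hS'def : S' = deriv S := funext fun t => ((hderiv t).deriv).symm
  have hS'A : AnalyticOnNhd ℝ S' Set.univ := by
    rw [hS'def]; exact hSA.deriv
  -- the difference D and its vanishing derivatives
  set D : ℝ → Matrix (Fin n) (Fin n) ℂ := fun t => S t - e t with hD_def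
  have hDA : AnalyticOnNhd ℝ D Set.univ := fun t ht => (hSA t ht).sub (heA t ht)
  have hDO : D =O[nhds 0] fun t : ℝ => |t| ^ (p + 1) := by
    obtain ⟨C, δ, hδ, hbound⟩ := horder
    rw [Asymptotics.isBigO_iff]
    refine ⟨C, ?_⟩
    have hballmem : ∀ᶠ t : ℝ in nhds 0, |t| ≤ δ := by
      filter_upwards [Metric.ball_mem_nhds (0:ℝ) hδ] with t ht
      exact le_of_lt (by simpa [Real.dist_eq] using ht)
    filter_upwards [hballmem] with t ht
    have hb := hbound t ht
    rw [he_eq t] at hb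
    calc ‖D t‖ ≤ C * |t| ^ (p + 1) := hb
      _ ≤ C * ‖|t| ^ (p + 1)‖ := by
          rw [Real.norm_eq_abs, abs_pow, abs_abs]
  have hDq : ∀ q, q ≤ p → iteratedDeriv q D 0 = 0 := fun q hq =>
    iteratedDeriv_eq_zero_of_isBigO (hDA 0 trivial) hDO q (Nat.lt_succ_of_le hq)
  -- deriv D = S' - Bh * e
  have hderivD : deriv D = fun t => S' t - Bh * e t := by
    funext t
    exact ((hderiv t).sub (hederiv t)).deriv
  have hD'O : (fun t => S' t - Bh * e t) =O[nhds 0] fun t : ℝ => |t| ^ p := by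
    rw [← hderivD]
    refine isBigO_of_iteratedDeriv_eq_zero (hDA.deriv 0 trivial) fun q hq => ?_
    rw [← iteratedDeriv_succ']
    exact hDq (q + 1) hq
  -- inverses
  set SI : ℝ → Matrix (Fin n) (Fin n) ℂ := fun t => Ring.inverse (S t) with hSI_def
  set eI : ℝ → Matrix (Fin n) (Fin n) ℂ := fun t => Ring.inverse (e t) with heI_def
  have hS0 : S 0 = 1 := by
    rw [hS 0]
    simp [NormedSpace.exp_zero]
  have hinv1 : AnalyticAt ℝ (Ring.inverse : Matrix (Fin n) (Fin n) ℂ → Matrix (Fin n) (Fin n) ℂ)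
      (1 : Matrix (Fin n) (Fin n) ℂ) := by
    have h1 := analyticAt_inverse (𝕜 := ℂ) (1 : (Matrix (Fin n) (Fin n) ℂ)ˣ)
    rw [Units.val_one] at h1
    exact h1.restrictScalars
  have hSIA : AnalyticAt ℝ SI 0 := by
    have h1 : AnalyticAt ℝ (Ring.inverse : Matrix (Fin n) (Fin n) ℂ → Matrix (Fin n) (Fin n) ℂ)
        (S 0) := by rw [hS0]; exact hinv1
    have h2 := h1.comp (hSA 0 trivial)
    simpa [Function.comp_def, hSI_def] using h2
  have he0 : e 0 = 1 := by
    rw [he_def]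
    simp [NormedSpace.exp_zero]
  have heIA : AnalyticAt ℝ eI 0 := by
    have h1 : AnalyticAt ℝ (Ring.inverse : Matrix (Fin n) (Fin n) ℂ → Matrix (Fin n) (Fin n) ℂ)
        (e 0) := by rw [he0]; exact hinv1
    have h2 := h1.comp (heA 0 trivial)
    simpa [Function.comp_def, heI_def] using h2
  -- G as analytic function
  have hGfun : ∀ t, G t = Complex.I • (S' t * SI t) := fun t => by
    rw [hG t, Matrix.nonsing_inv_eq_ringInverse]
  have hGA : AnalyticAt ℝ G 0 := by
    have h1 : AnalyticAt ℝ (fun t => Complex.I • (S' t * SI t)) 0 :=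
      (analyticAt_const (v := Complex.I)).smul ((hS'A 0 trivial).mul hSIA)
    exact h1.congr (Filter.Eventually.of_forall fun t => (hGfun t).symm)
  -- eventual invertibility of S
  have hunit : ∀ᶠ t : ℝ in nhds 0, IsUnit (S t) := by
    have hcont : ContinuousAt S 0 := (hSA 0 trivial).continuousAt
    have hmem : {x : Matrix (Fin n) (Fin n) ℂ | IsUnit x} ∈ nhds (S 0) :=
      Units.isOpen.mem_nhds (by rw [hS0]; exact isUnit_one)
    exact hcont hmem
  -- the key pointwise identity near 0
  set Φ : ℝ → Matrix (Fin n) (Fin n) ℂ := fun t =>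
    Complex.I • ((S' t - Bh * e t) * SI t + (Bh * e t) * (SI t * ((e t - S t) * eI t))) with hΦ_def
  have hKeq : (fun t => G t - H) =ᶠ[nhds 0] Φ := by
    filter_upwards [hunit] with t ht
    have hue : IsUnit (e t) := by
      rw [he_def]
      exact NormedSpace.isUnit_exp _
    have h1 : SI t * S t = 1 := Ring.inverse_mul_cancel _ ht
    have h2 : e t * eI t = 1 := Ring.mul_inverse_cancel _ hue
    have hH' : Complex.I • ((Bh * e t) * eI t) = H := by
      rw [mul_assoc, h2, mul_one, hBh, smul_smul]
      norm_num [Complex.I_mul_I]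
    rw [hGfun t, ← hH', hΦ_def, ← smul_sub]
    congr 1
    have h3 : SI t * ((e t - S t) * eI t) = SI t - eI t := by
      rw [sub_mul, h2, mul_sub, mul_one, ← mul_assoc, h1, one_mul]
    rw [h3]
    noncomm_ring
  -- big-O bounds
  have c2 : SI =O[nhds 0] (fun _ : ℝ => (1 : ℝ)) := hSIA.continuousAt.isBigO_one ℝ
  have c5 : eI =O[nhds 0] (fun _ : ℝ => (1 : ℝ)) := heIA.continuousAt.isBigO_one ℝ
  have c3 : (fun t => Bh * e t) =O[nhds 0] (fun _ : ℝ => (1 : ℝ)) :=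
    (continuousAt_const.mul (heA 0 trivial).continuousAt).isBigO_one ℝ
  have c4 : (fun t => e t - S t) =O[nhds 0] fun t : ℝ => |t| ^ p := by
    have h1 : (fun t => e t - S t) =O[nhds 0] fun t : ℝ => |t| ^ (p + 1) := by
      have h2 := hDO.neg_left
      simpa [hD_def, neg_sub] using h2
    refine h1.trans ?_
    have h2 := aux_abs_pow_isBigO (Nat.le_succ p)
    simpa [Real.norm_eq_abs] using h2
  have hterm1 : (fun t => (S' t - Bh * e t) * SI t) =O[nhds 0] fun t : ℝ => |t| ^ p := by
    have h1 := hD'O.mul c2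
    simpa using h1
  have hterm2 : (fun t => (Bh * e t) * (SI t * ((e t - S t) * eI t)))
      =O[nhds 0] fun t : ℝ => |t| ^ p := by
    have h1 := c3.mul (c2.mul (c4.mul c5))
    simpa using h1
  have hΦO : Φ =O[nhds 0] fun t : ℝ => |t| ^ p := by
    rw [hΦ_def]
    exact ((hterm1.add hterm2).const_smul_left Complex.I)
  have hKO : (fun t => G t - H) =O[nhds 0] fun t : ℝ => |t| ^ p := hKeq.trans_isBigO hΦO
  have hKA : AnalyticAt ℝ (fun t => G t - H) 0 := hGA.sub analyticAt_const
  have hvanish := iteratedDeriv_eq_zero_of_isBigO hKA hKO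
  constructor
  · have h0 := hvanish 0 (by omega)
    rw [iteratedDeriv_zero] at h0
    exact sub_eq_zero.mp h0
  · intro q hq1 hq2
    have hqp : q < p := by omega
    obtain ⟨m, rfl⟩ : ∃ m, q = m + 1 := ⟨q - 1, by omega⟩
    have hderivGK : deriv (fun t => G t - H) = deriv G := funext fun t => deriv_sub_const H
    calc iteratedDeriv (m + 1) G 0 = iteratedDeriv m (deriv G) 0 := by rw [iteratedDeriv_succ']; rfl
      _ = iteratedDeriv m (deriv fun t => G t - H) 0 := by rw [hderivGK]
      _ = iteratedDeriv (m + 1) (fun t => G t - H) 0 := by exact congrFun iteratedDeriv_succ'.symm 0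
      _ = 0 := hvanish (m + 1) hqp
end
end

section
/- The linear system ∑_{i=1}^{p+1} c_i = 1 and ∑_{i=1}^{p+1} c_i / k_i^q = 0 for q = p, p+1, …, 2p−1 has a unique real solution (c_1,…,c_{p+1}) whenever k_1,…,k_{p+1} are distinct positive integers. -/
open Polynomial Finset

/-- Key injectivity lemma: if `a₀ + x^p·(∑ aⱼ₊₁ x^j)` vanishes at `p+1` distinct
positive points, then all `aⱼ` vanish. -/
lemma aux_vanish (p : ℕ) (hp : 1 ≤ p) (x : Fin (p + 1) → ℝ)
    (hx0 : ∀ i, 0 < x i) (hxa : StrictAnti x) (a : Fin (p + 1) → ℝ)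
    (h : ∀ i, a 0 + x i ^ p * ∑ j : Fin p, a j.succ * x i ^ (j : ℕ) = 0) :
    a = 0 := by
  classical
  set Q : ℝ[X] := ∑ j : Fin p, C (a j.succ) * X ^ (j : ℕ) with hQdef
  set P : ℝ[X] := C (a 0) + X ^ p * Q with hPdef
  have hQeval : ∀ t : ℝ, Q.eval t = ∑ j : Fin p, a j.succ * t ^ (j : ℕ) := by
    intro t; simp [hQdef, eval_finset_sum]
  have hPeval : ∀ i, P.eval (x i) = 0 := by
    intro i
    simp only [hPdef, eval_add, eval_C, eval_mul, eval_pow, eval_X, hQeval]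
    exact h i
  -- Rolle between consecutive nodes
  have hroll : ∀ j : Fin p, ∃ z ∈ Set.Ioo (x j.succ) (x j.castSucc),
      P.derivative.eval z = 0 := by
    intro j
    have hlt : x j.succ < x j.castSucc := hxa (Fin.castSucc_lt_succ : j.castSucc < j.succ)
    obtain ⟨z, hz, hz0⟩ := exists_deriv_eq_zero (f := fun t => P.eval t) hlt
      ((P.continuous).continuousOn)
      (by simp only [hPeval])
    refine ⟨z, hz, ?_⟩
    rwa [Polynomial.deriv] at hz0
  choose z hzmem hz0 using hroll
  have hzpos : ∀ j, 0 < z j := fun j => (hx0 j.succ).trans (hzmem j).1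
  have hzanti : StrictAnti z := by
    intro j1 j2 hj
    have h1 : x j2.castSucc ≤ x j1.succ := by
      apply hxa.antitone
      have hj' : (j1 : ℕ) < (j2 : ℕ) := hj
      rw [Fin.le_def]
      simp only [Fin.val_succ, Fin.coe_castSucc]
      omega
    exact lt_of_lt_of_le ((hzmem j2).2.trans_le h1) (le_of_lt (hzmem j1).1)
  -- derivative P = X^(p-1) * R
  set R : ℝ[X] := C (p : ℝ) * Q + X * derivative Q with hRdef
  have hder : derivative P = X ^ (p - 1) * R := by
    rw [hPdef, derivative_add, derivative_C, derivative_mul, derivative_X_pow]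
    rw [hRdef]
    have hxp : (X : ℝ[X]) ^ p = X ^ (p - 1) * X := by
      rw [← pow_succ]; congr 1; omega
    rw [hxp]
    push_cast
    ring
  have hReval : ∀ j : Fin p, R.eval (z j) = 0 := by
    intro j
    have := hz0 j
    rw [hder, eval_mul, eval_pow, eval_X] at this
    have hzne : z j ^ (p - 1) ≠ 0 := pow_ne_zero _ (ne_of_gt (hzpos j))
    exact (mul_eq_zero.mp this).resolve_left hzne
  have hQdeg : Q.natDegree ≤ p - 1 := by
    apply natDegree_sum_le_of_forall_le
    intro j _
    calc (C (a j.succ) * X ^ (j : ℕ)).natDegree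
        ≤ (C (a j.succ)).natDegree + ((X : ℝ[X]) ^ (j : ℕ)).natDegree :=
          natDegree_mul_le
      _ ≤ p - 1 := by rw [natDegree_C, natDegree_X_pow]; have := j.2; omega
  have hRdeg : R.natDegree < p := by
    have h1 : (C (p : ℝ) * Q).natDegree ≤ p - 1 := by
      calc (C (p : ℝ) * Q).natDegree ≤ (C (p : ℝ)).natDegree + Q.natDegree :=
            natDegree_mul_le
        _ ≤ p - 1 := by rw [natDegree_C]; omega
    have h2 : (X * derivative Q).natDegree < p := by
      rcases eq_or_ne Q.natDegree 0 with hq | hq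
      · have : derivative Q = 0 := by
          rw [Polynomial.eq_C_of_natDegree_eq_zero hq, derivative_C]
        rw [this, mul_zero, natDegree_zero]; omega
      · have hd : (derivative Q).natDegree ≤ Q.natDegree - 1 :=
          natDegree_derivative_le Q
        calc (X * derivative Q).natDegree
            ≤ (X : ℝ[X]).natDegree + (derivative Q).natDegree := natDegree_mul_le
          _ < p := by rw [natDegree_X]; omega
    calc R.natDegree ≤ max (C (p : ℝ) * Q).natDegree (X * derivative Q).natDegree :=
          natDegree_add_le _ _
      _ < p := by omega
  have hR0 : R = 0 := by
    apply R.eq_zero_of_natDegree_lt_card_of_eval_eq_zero hzanti.injective hReval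
    simpa using hRdeg
  -- hence derivative of X^p * Q is zero, so Q = 0
  have hderP : derivative P = 0 := by rw [hder, hR0, mul_zero]
  have hXQ : X ^ p * Q = C ((X ^ p * Q).coeff 0) := by
    apply Polynomial.eq_C_of_derivative_eq_zero
    have : derivative ((X : ℝ[X]) ^ p * Q) = derivative P := by
      rw [hPdef, derivative_add, derivative_C, zero_add]
    rw [this, hderP]
  have hcoeff0 : ((X : ℝ[X]) ^ p * Q).coeff 0 = 0 := by
    rw [mul_comm, coeff_mul_X_pow']
    rw [if_neg (by omega)]
  have hQ0 : Q = 0 := by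
    have : (X : ℝ[X]) ^ p * Q = 0 := by rw [hXQ, hcoeff0, map_zero]
    exact (mul_eq_zero.mp this).resolve_left (pow_ne_zero _ X_ne_zero)
  have ha0 : a 0 = 0 := by
    have := hPeval 0
    rw [hPdef, hQ0, mul_zero, add_zero, eval_C] at this
    exact this
  have hasucc : ∀ j : Fin p, a j.succ = 0 := by
    intro j
    have : Q.coeff (j : ℕ) = a j.succ := by
      rw [hQdef, finset_sum_coeff]
      rw [Finset.sum_eq_single j]
      · simp [coeff_C_mul, coeff_X_pow]
      · intro b _ hb
        simp only [coeff_C_mul, coeff_X_pow]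
        rw [if_neg, mul_zero]
        exact fun hc => hb (Fin.ext hc.symm)
      · simp
    rw [hQ0] at this
    simpa using this.symm
  funext i
  refine Fin.cases ?_ ?_ i
  · exact ha0
  · exact hasucc

/-- The linear system `∑_{i=1}^{p+1} cᵢ = 1`, `∑_{i=1}^{p+1} cᵢ/kᵢ^q = 0` for
`q = p, p+1, …, 2p−1`, has a unique real solution whenever `k₁ < ⋯ < k_{p+1}` are
distinct positive integers. -/
theorem mpf_coefficients_exist_unique (p : ℕ) (hp : 1 ≤ p)
    (k : Fin (p + 1) → ℕ) (hkpos : ∀ i, 0 < k i) (hk : StrictMono k) :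
    ∃! c : Fin (p + 1) → ℝ,
      (∑ i, c i = 1) ∧
      ∀ q : ℕ, p ≤ q → q ≤ 2 * p - 1 → ∑ i, c i / (k i : ℝ) ^ q = 0 := by
  classical
  set x : Fin (p + 1) → ℝ := fun i => ((k i : ℝ))⁻¹ with hxdef
  have hkR : ∀ i, (0 : ℝ) < (k i : ℝ) := fun i => by exact_mod_cast hkpos i
  have hx0 : ∀ i, 0 < x i := fun i => inv_pos.mpr (hkR i)
  have hxa : StrictAnti x := by
    intro i j hij
    exact inv_strictAnti₀ (hkR i) (by exact_mod_cast hk hij)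
  set e : Fin (p + 1) → ℕ := fun q => if q = 0 then 0 else p + ((q : ℕ) - 1) with hedef
  set M : Matrix (Fin (p + 1)) (Fin (p + 1)) ℝ := fun q i => x i ^ e q with hMdef
  have hdet : M.det ≠ 0 := by
    intro h0
    obtain ⟨v, hv, hvM⟩ := Matrix.exists_vecMul_eq_zero_iff.mpr h0
    apply hv
    apply aux_vanish p hp x hx0 hxa
    intro i
    have hi := congrFun hvM i
    simp only [Matrix.vecMul, dotProduct, Pi.zero_apply] at hi
    have he0 : e 0 = 0 := by simp [hedef]
    have hesucc : ∀ j : Fin p, e j.succ = p + (j : ℕ) := by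
      intro j
      simp only [hedef]
      rw [if_neg (Fin.succ_ne_zero j)]
      simp
    rw [← hi, Fin.sum_univ_succ]
    simp only [hMdef, he0, hesucc, pow_zero, mul_one, pow_add]
    rw [Finset.mul_sum]
    congr 1
    apply Finset.sum_congr rfl
    intro j _
    ring
  have hunit : IsUnit M := by
    rwa [Matrix.isUnit_iff_isUnit_det, isUnit_iff_ne_zero]
  have hinj : Function.Injective M.mulVec := Matrix.mulVec_injective_iff_isUnit.mpr hunit
  have hsurj : Function.Surjective M.mulVec := Matrix.mulVec_surjective_iff_isUnit.mpr hunit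
  set b : Fin (p + 1) → ℝ := fun q => if q = 0 then 1 else 0 with hbdef
  have hdiv : ∀ (c : Fin (p + 1) → ℝ) i (q : ℕ), c i / (k i : ℝ) ^ q = x i ^ q * c i := by
    intro c i q
    rw [hxdef, div_eq_mul_inv, ← inv_pow, mul_comm]
  have hiff : ∀ c : Fin (p + 1) → ℝ,
      ((∑ i, c i = 1) ∧ ∀ q : ℕ, p ≤ q → q ≤ 2 * p - 1 → ∑ i, c i / (k i : ℝ) ^ q = 0)
        ↔ M.mulVec c = b := by
    intro c
    constructor
    · rintro ⟨h1, h2⟩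
      funext q
      simp only [Matrix.mulVec, dotProduct, hMdef]
      rcases eq_or_ne q 0 with rfl | hq
      · simp only [hedef, if_pos rfl, pow_zero, one_mul, hbdef, if_pos rfl]
        exact h1
      · have heq : e q = p + ((q : ℕ) - 1) := by simp only [hedef]; rw [if_neg hq]
        have hq1 : 1 ≤ (q : ℕ) := by
          rcases Nat.eq_zero_or_pos (q : ℕ) with h | h
          · exact absurd (Fin.ext h) hq
          · exact h
        have hqp : (q : ℕ) ≤ p := by have := q.2; omega
        have := h2 (p + ((q : ℕ) - 1)) (by omega) (by omega)
        simp only [hdiv] at this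
        rw [hbdef]; simp only [if_neg hq]
        rw [← this, ← heq]
    · intro hMc
      have hrow : ∀ q, ∑ i, x i ^ e q * c i = b q := by
        intro q
        have := congrFun hMc q
        simpa [Matrix.mulVec, dotProduct, hMdef] using this
      constructor
      · have := hrow 0
        simp only [hedef, if_pos rfl, pow_zero, one_mul, hbdef] at this
        simpa using this
      · intro q hq1 hq2
        have hqlt : q - p + 1 < p + 1 := by omega
        set j : Fin (p + 1) := ⟨q - p + 1, hqlt⟩ with hjdef
        have hjne : j ≠ 0 := by
          intro hcon
          have : q - p + 1 = 0 := congrArg Fin.val hcon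
          omega
        have hej : e j = q := by
          simp only [hedef, if_neg hjne]
          show p + (q - p + 1 - 1) = q
          omega
        have := hrow j
        rw [hej, hbdef] at this
        simp only [if_neg hjne] at this
        simp only [hdiv]
        exact this
  obtain ⟨c, hc⟩ := hsurj b
  exact ⟨c, (hiff c).mpr hc, fun c' hc' => hinj (by rw [(hiff c').mp hc', hc])⟩
end

section
/- Euler–Maclaurin formula: if f has continuous derivatives up to order s on [j₁, j₂] for integers j₁ < j₂, then ∑_{j=j₁+1}^{j₂} f(j) = ∫_{j₁}^{j₂} f(x) dx + ∑_{ℓ=1}^{s} (−1)^ℓ (B_ℓ/ℓ!)(f^{(ℓ−1)}(j₂) − f^{(ℓ−1)}(j₁)) + ((−1)^{s−1}/s!) ∫_{j₁}^{j₂} B_s(x − ⌊x⌋) f^{(s)}(x) dx. -/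
noncomputable section

open Set MeasureTheory intervalIntegral
open scoped Interval

namespace EMAux

/-- Real Bernoulli polynomial function. -/
def Q (s : ℕ) (t : ℝ) : ℝ := Polynomial.aeval t (Polynomial.bernoulli s)

lemma Q_map (s : ℕ) (t : ℝ) :
    Q s t = ((Polynomial.bernoulli s).map (algebraMap ℚ ℝ)).eval t := by
  rw [Q, Polynomial.aeval_def, Polynomial.eval_map]

lemma Q_continuous (s : ℕ) : Continuous (Q s) := by
  exact Polynomial.continuous_aeval (p := Polynomial.bernoulli s) (A := ℝ)

lemma Q_hasDerivAt (s : ℕ) (t : ℝ) :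
    HasDerivAt (Q (s + 1)) (((s : ℝ) + 1) * Q s t) t := by
  have h := Polynomial.hasDerivAt_aeval (q := Polynomial.bernoulli (s + 1)) t
  rw [Polynomial.derivative_bernoulli_add_one] at h
  unfold Q; simpa [push_cast] using h

lemma Q_zero_eq (t : ℝ) : Q 0 t = 1 := by simp [Q]

lemma Q_at_one (s : ℕ) : Q s 1 = ((bernoulli' s : ℚ) : ℝ) := by
  rw [Q_map, Polynomial.eval_one_map, Polynomial.bernoulli_eval_one, eq_ratCast]

lemma Q_at_zero (s : ℕ) : Q s 0 = ((bernoulli s : ℚ) : ℝ) := by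
  rw [Q_map, Polynomial.eval_zero_map, Polynomial.bernoulli_eval_zero, eq_ratCast]

/-- Integration by parts for Bernoulli polynomials on `[a, a+1]`. -/
lemma ibp (m : ℕ) (a : ℝ) (v v' : ℝ → ℝ)
    (hv : ∀ x ∈ Icc a (a + 1), HasDerivWithinAt v (v' x) (Icc a (a + 1)) x)
    (hvc : ContinuousOn v (Icc a (a + 1))) (hv'c : ContinuousOn v' (Icc a (a + 1))) :
    ((m : ℝ) + 1) * ∫ x in a..a + 1, Q m (x - a) * v x
      = Q (m + 1) 1 * v (a + 1) - Q (m + 1) 0 * v a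
        - ∫ x in a..a + 1, Q (m + 1) (x - a) * v' x := by
  have hlt : a < a + 1 := lt_add_one a
  have hle : a ≤ a + 1 := hlt.le
  have huIcc : uIcc a (a + 1) = Icc a (a + 1) := uIcc_of_le hle
  have hucont : Continuous fun x : ℝ => Q (m + 1) (x - a) :=
    (Q_continuous (m + 1)).comp (continuous_id.sub continuous_const)
  have hu'cont : Continuous fun x : ℝ => ((m : ℝ) + 1) * Q m (x - a) :=
    continuous_const.mul ((Q_continuous m).comp (continuous_id.sub continuous_const))
  have hmin : min a (a + 1) = a := min_eq_left hle
  have hmax : max a (a + 1) = a + 1 := max_eq_right hle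
  have key := integral_deriv_mul_eq_sub_of_hasDerivAt
      (u := fun x => Q (m + 1) (x - a)) (v := v)
      (u' := fun x => ((m : ℝ) + 1) * Q m (x - a)) (v' := v')
      hucont.continuousOn (huIcc ▸ hvc)
      (by
        intro x hx
        have h1 : HasDerivAt (fun x : ℝ => x - a) 1 x := (hasDerivAt_id x).sub_const a
        have h2 := (Q_hasDerivAt m (x - a)).comp x h1
        simpa [Function.comp_def] using h2)
      (by
        intro x hx
        rw [hmin, hmax] at hx
        exact (hv x (Ioo_subset_Icc_self hx)).hasDerivAt (Icc_mem_nhds hx.1 hx.2))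
      (hu'cont.intervalIntegrable a (a + 1))
      ((huIcc ▸ hv'c).intervalIntegrable)
  have hint1 : IntervalIntegrable (fun x => ((m : ℝ) + 1) * Q m (x - a) * v x)
      volume a (a + 1) :=
    (hu'cont.continuousOn.mul (huIcc ▸ hvc)).intervalIntegrable
  have hint2 : IntervalIntegrable (fun x => Q (m + 1) (x - a) * v' x) volume a (a + 1) :=
    (hucont.continuousOn.mul (huIcc ▸ hv'c)).intervalIntegrable
  rw [integral_add hint1 hint2] at key
  have h3 : ∫ x in a..a + 1, ((m : ℝ) + 1) * Q m (x - a) * v x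
      = ((m : ℝ) + 1) * ∫ x in a..a + 1, Q m (x - a) * v x := by
    simp_rw [mul_assoc]
    exact integral_const_mul _ _
  rw [h3] at key
  simp only [add_sub_cancel_left, sub_self] at key
  linarith [key]

/-- Euler–Maclaurin on a unit interval `[a, a+1]`, stated for a generic tower of
derivatives `g`. -/
lemma unit_step : ∀ s : ℕ, 1 ≤ s → ∀ (a : ℝ) (g : ℕ → ℝ → ℝ),
    (∀ ℓ, ℓ < s → ∀ x ∈ Icc a (a + 1), HasDerivWithinAt (g ℓ) (g (ℓ + 1) x) (Icc a (a + 1)) x) →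
    (∀ ℓ, ℓ ≤ s → ContinuousOn (g ℓ) (Icc a (a + 1))) →
    g 0 (a + 1) = (∫ x in a..a + 1, g 0 x)
      + (∑ ℓ ∈ Finset.Icc 1 s, (-1 : ℝ) ^ ℓ * ((bernoulli ℓ : ℝ) / ℓ.factorial) *
          (g (ℓ - 1) (a + 1) - g (ℓ - 1) a))
      + ((-1 : ℝ) ^ (s - 1) / s.factorial) * ∫ x in a..a + 1, Q s (x - a) * g s x := by
  intro s hs
  induction s, hs using Nat.le_induction with
  | base =>
    intro a g hd hc
    have h1 := ibp 0 a (g 0) (g 1) (hd 0 one_pos) (hc 0 (by norm_num)) (hc 1 le_rfl)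
    simp only [Q_zero_eq, one_mul, Nat.cast_zero, zero_add] at h1
    rw [Q_at_one, Q_at_zero, bernoulli'_one, bernoulli_one] at h1
    norm_num at h1
    simp only [Finset.Icc_self, Finset.sum_singleton, pow_one, Nat.factorial_one, Nat.cast_one,
      Nat.sub_self, pow_zero]
    rw [bernoulli_one]
    norm_num
    linarith [h1]
  | succ s hs IH =>
    intro a g hd hc
    have hd' : ∀ ℓ, ℓ < s → ∀ x ∈ Icc a (a + 1),
        HasDerivWithinAt (g ℓ) (g (ℓ + 1) x) (Icc a (a + 1)) x :=
      fun ℓ h => hd ℓ (h.trans (Nat.lt_succ_self s))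
    have hc' : ∀ ℓ, ℓ ≤ s → ContinuousOn (g ℓ) (Icc a (a + 1)) :=
      fun ℓ h => hc ℓ (h.trans (Nat.le_succ s))
    have IH' := IH a g hd' hc'
    have h2 := ibp s a (g s) (g (s + 1)) (hd s (Nat.lt_succ_self s)) (hc s (Nat.le_succ s))
      (hc (s + 1) le_rfl)
    have hB1 : Q (s + 1) 1 = ((bernoulli (s + 1) : ℚ) : ℝ) := by
      rw [Q_at_one, bernoulli_eq_bernoulli'_of_ne_one (by omega)]
    rw [hB1, Q_at_zero] at h2
    obtain ⟨t, rfl⟩ : ∃ t, s = t + 1 := ⟨s - 1, by omega⟩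
    rw [Finset.sum_Icc_succ_top (by omega : 1 ≤ t + 1 + 1)]
    rw [IH']
    have hfac : ((t + 1 + 1).factorial : ℝ) = ((t : ℝ) + 2) * ((t + 1).factorial : ℝ) := by
      rw [Nat.factorial_succ]; push_cast; ring
    have hfacne : ((t + 1).factorial : ℝ) ≠ 0 := by positivity
    have htne : ((t : ℝ) + 2) ≠ 0 := by positivity
    have hidx1 : t + 1 - 1 = t := by omega
    have hidx2 : t + 1 + 1 - 1 = t + 1 := by omega
    rw [hidx1, hidx2, hfac]
    push_cast at h2
    have hpow : (-1 : ℝ) ^ (t + 1 + 1) = (-1 : ℝ) ^ t := by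
      rw [pow_succ, pow_succ]; ring
    have hpow2 : (-1 : ℝ) ^ (t + 1) = -(-1 : ℝ) ^ t := by rw [pow_succ]; ring
    rw [hpow, hpow2]
    field_simp
    linear_combination ((-1 : ℝ) ^ t) * h2

end EMAux

open EMAux

/-- Euler–Maclaurin formula: if `f` is `C^s` on `[j₁, j₂]` for integers `j₁ < j₂`, then
`∑_{j=j₁+1}^{j₂} f(j) = ∫_{j₁}^{j₂} f + ∑_{ℓ=1}^{s} (−1)^ℓ (B_ℓ/ℓ!)(f^{(ℓ−1)}(j₂) − f^{(ℓ−1)}(j₁))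
+ ((−1)^{s−1}/s!) ∫_{j₁}^{j₂} B_s(x−⌊x⌋) f^{(s)}(x) dx`. -/
theorem euler_maclaurin (s : ℕ) (hs : 1 ≤ s) (j₁ j₂ : ℤ) (hj : j₁ < j₂)
    (f : ℝ → ℝ) (hf : ContDiffOn ℝ s f (Set.Icc (j₁ : ℝ) (j₂ : ℝ))) :
    ∑ j ∈ Finset.Icc (j₁ + 1) j₂, f (j : ℝ) =
      (∫ x in (j₁ : ℝ)..(j₂ : ℝ), f x) +
      (∑ ℓ ∈ Finset.Icc 1 s, (-1 : ℝ) ^ ℓ * ((bernoulli ℓ : ℝ) / ℓ.factorial) *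
        (iteratedDerivWithin (ℓ - 1) f (Set.Icc (j₁ : ℝ) (j₂ : ℝ)) (j₂ : ℝ) -
         iteratedDerivWithin (ℓ - 1) f (Set.Icc (j₁ : ℝ) (j₂ : ℝ)) (j₁ : ℝ))) +
      ((-1 : ℝ) ^ (s - 1) / s.factorial) *
        ∫ x in (j₁ : ℝ)..(j₂ : ℝ),
          (Polynomial.aeval (Int.fract x) (Polynomial.bernoulli s)) *
            iteratedDerivWithin s f (Set.Icc (j₁ : ℝ) (j₂ : ℝ)) x := by
  have hj' : (j₁ : ℝ) < (j₂ : ℝ) := by exact_mod_cast hj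
  have hUD : UniqueDiffOn ℝ (Set.Icc (j₁ : ℝ) (j₂ : ℝ)) := uniqueDiffOn_Icc hj'
  set g : ℕ → ℝ → ℝ := fun ℓ => iteratedDerivWithin ℓ f (Set.Icc (j₁ : ℝ) (j₂ : ℝ)) with hg
  have hg0 : g 0 = f := iteratedDerivWithin_zero
  have hgc : ∀ ℓ, ℓ ≤ s → ContinuousOn (g ℓ) (Set.Icc (j₁ : ℝ) (j₂ : ℝ)) := fun ℓ hℓ =>
    hf.continuousOn_iteratedDerivWithin (by exact_mod_cast hℓ) hUD
  have hgd : ∀ ℓ, ℓ < s → ∀ x ∈ Set.Icc (j₁ : ℝ) (j₂ : ℝ),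
      HasDerivWithinAt (g ℓ) (g (ℓ + 1) x) (Set.Icc (j₁ : ℝ) (j₂ : ℝ)) x := by
    intro ℓ hℓ x hx
    have hdiff := hf.differentiableOn_iteratedDerivWithin (m := ℓ) (by exact_mod_cast hℓ) hUD
    have h1 := (hdiff x hx).hasDerivWithinAt
    have h2 : g (ℓ + 1) x = derivWithin (g ℓ) (Set.Icc (j₁ : ℝ) (j₂ : ℝ)) x := by
      rw [hg]; exact congrFun iteratedDerivWithin_succ x
    rw [h2]
    exact h1
  set n : ℕ := (j₂ - j₁).toNat with hn
  have hn1 : 1 ≤ n := by omega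
  have hn' : (n : ℝ) = (j₂ : ℝ) - (j₁ : ℝ) := by
    have h : ((j₂ - j₁).toNat : ℤ) = j₂ - j₁ := Int.toNat_of_nonneg (by omega)
    rw [hn]; exact_mod_cast h
  set a : ℕ → ℝ := fun i => (j₁ : ℝ) + i with ha
  have ha2 : (j₂ : ℝ) = a n := by rw [ha]; simp [hn']
  have ha0 : (j₁ : ℝ) = a 0 := by simp [ha]
  have hasucc : ∀ i, a (i + 1) = a i + 1 := by intro i; rw [ha]; push_cast; ring
  have hsub : ∀ i, i < n → Set.Icc (a i) (a i + 1) ⊆ Set.Icc (j₁ : ℝ) (j₂ : ℝ) := by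
    intro i hi
    apply Set.Icc_subset_Icc
    · simp only [ha]
      exact le_add_of_nonneg_right (by positivity)
    · rw [ha2]
      simp only [ha]
      have : (i : ℝ) + 1 ≤ (n : ℝ) := by exact_mod_cast hi
      linarith
  -- per-piece formula
  have step : ∀ i, i < n → f (a (i + 1)) = (∫ x in a i..a (i + 1), f x)
      + (∑ ℓ ∈ Finset.Icc 1 s, (-1 : ℝ) ^ ℓ * ((bernoulli ℓ : ℝ) / ℓ.factorial) *
          (g (ℓ - 1) (a (i + 1)) - g (ℓ - 1) (a i)))
      + ((-1 : ℝ) ^ (s - 1) / s.factorial) * ∫ x in a i..a (i + 1), Q s (x - a i) * g s x := by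
    intro i hi
    have h := unit_step s hs (a i) g
      (fun ℓ hℓ x hx => (hgd ℓ hℓ x (hsub i hi hx)).mono (hsub i hi))
      (fun ℓ hℓ => (hgc ℓ hℓ).mono (hsub i hi))
    rw [hg0] at h
    rw [hasucc i]
    exact h
  have hconts : ContinuousOn (g s) (Set.Icc (j₁ : ℝ) (j₂ : ℝ)) := hgc s le_rfl
  have hcontf : ContinuousOn f (Set.Icc (j₁ : ℝ) (j₂ : ℝ)) := by
    rw [← hg0]; exact hgc 0 (by omega)
  have hIcc_uIcc : ∀ i, i < n → uIcc (a i) (a (i + 1)) = Set.Icc (a i) (a i + 1) := by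
    intro i hi
    rw [hasucc i]; exact uIcc_of_le (lt_add_one (a i)).le
  -- integrability of f on the pieces
  have hfint : ∀ k, k < n → IntervalIntegrable f volume (a k) (a (k + 1)) := by
    intro k hk
    apply ContinuousOn.intervalIntegrable
    rw [hIcc_uIcc k hk]
    exact hcontf.mono (hsub k hk)
  -- a.e. facts for the fractional part
  have hfract : ∀ i, i < n → ∀ x, x ≠ a (i + 1) → x ∈ Ι (a i) (a (i + 1)) →
      Q s (x - a i) * g s x = Q s (Int.fract x) * g s x := by
    intro i hi x hx hmem
    rw [uIoc_of_le (by rw [hasucc i]; linarith [lt_add_one (a i)])] at hmem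
    have h1 : a i < x := hmem.1
    have h2 : x < a i + 1 := by
      rcases lt_or_eq_of_le hmem.2 with h | h
      · rwa [hasucc i] at h
      · exact absurd h hx
    have hfloor : ⌊x⌋ = j₁ + i := by
      rw [Int.floor_eq_iff]
      constructor
      · simp only [ha] at h1; push_cast; linarith
      · simp only [ha] at h2; push_cast; linarith
    have : Int.fract x = x - a i := by
      rw [Int.fract, hfloor, ha]; push_cast; ring
    rw [this]
  have hae : ∀ i, i < n → ∀ᵐ x : ℝ, x ∈ Ι (a i) (a (i + 1)) →
      Q s (x - a i) * g s x = Q s (Int.fract x) * g s x := by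
    intro i hi
    have hone : ∀ᵐ x : ℝ, x ≠ a (i + 1) := by
      rw [ae_iff]
      simp only [not_not, Set.setOf_eq_eq_singleton]
      exact measure_singleton _
    filter_upwards [hone] with x hx hmem
    exact hfract i hi x hx hmem
  have hfraceq : ∀ i, i < n → (∫ x in a i..a (i + 1), Q s (x - a i) * g s x)
      = ∫ x in a i..a (i + 1), Q s (Int.fract x) * g s x := by
    intro i hi
    exact intervalIntegral.integral_congr_ae (hae i hi)
  -- integrability of the Bernoulli remainder integrand on the pieces
  have hQint : ∀ k, k < n → IntervalIntegrable (fun x => Q s (Int.fract x) * g s x)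
      volume (a k) (a (k + 1)) := by
    intro k hk
    have hcont : IntervalIntegrable (fun x => Q s (x - a k) * g s x) volume (a k) (a (k + 1)) := by
      apply ContinuousOn.intervalIntegrable
      rw [hIcc_uIcc k hk]
      exact (((Q_continuous s).comp (continuous_id.sub continuous_const)).continuousOn).mul
        (hconts.mono (hsub k hk))
    apply hcont.congr_ae
    have h := hae k hk
    have h2 : ∀ᵐ x ∂(volume.restrict (Ι (a k) (a (k + 1)))), x ∈ Ι (a k) (a (k + 1)) →
        Q s (x - a k) * g s x = Q s (Int.fract x) * g s x :=
      h.filter_mono (ae_mono Measure.restrict_le_self)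
    have h3 : ∀ᵐ x ∂(volume.restrict (Ι (a k) (a (k + 1)))), x ∈ Ι (a k) (a (k + 1)) :=
      ae_restrict_mem measurableSet_uIoc
    filter_upwards [h2, h3] with x hx1 hx2
    exact hx1 hx2
  -- now sum the per-piece formulas
  have hsum1 : ∑ j ∈ Finset.Icc (j₁ + 1) j₂, f (j : ℝ) = ∑ i ∈ Finset.range n, f (a (i + 1)) := by
    apply Finset.sum_nbij' (i := fun j => (j - j₁ - 1).toNat) (j := fun i => j₁ + 1 + (i : ℤ))
    · intro j hj2
      rw [Finset.mem_Icc] at hj2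
      simp only [Finset.mem_range]
      omega
    · intro i hi
      rw [Finset.mem_range] at hi
      rw [Finset.mem_Icc]
      omega
    · intro j hj2
      rw [Finset.mem_Icc] at hj2
      omega
    · intro i hi
      rw [Finset.mem_range] at hi
      omega
    · intro j hj2
      rw [Finset.mem_Icc] at hj2
      congr 1
      have h0 : ((j - j₁ - 1).toNat : ℤ) = j - j₁ - 1 :=
        Int.toNat_of_nonneg (by omega)
      have hcast : (((j - j₁ - 1).toNat : ℕ) : ℝ) = (j : ℝ) - (j₁ : ℝ) - 1 := by
        exact_mod_cast congrArg (Int.cast : ℤ → ℝ) h0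
      simp only [ha]
      push_cast
      rw [hcast]
      ring
  have hsum2 : ∑ i ∈ Finset.range n, (∫ x in a i..a (i + 1), f x)
      = ∫ x in (j₁ : ℝ)..(j₂ : ℝ), f x := by
    rw [intervalIntegral.sum_integral_adjacent_intervals hfint, ← ha0, ← ha2]
  have hsum3 : ∑ i ∈ Finset.range n,
      (∑ ℓ ∈ Finset.Icc 1 s, (-1 : ℝ) ^ ℓ * ((bernoulli ℓ : ℝ) / ℓ.factorial) *
          (g (ℓ - 1) (a (i + 1)) - g (ℓ - 1) (a i)))
      = ∑ ℓ ∈ Finset.Icc 1 s, (-1 : ℝ) ^ ℓ * ((bernoulli ℓ : ℝ) / ℓ.factorial) *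
          (g (ℓ - 1) (j₂ : ℝ) - g (ℓ - 1) (j₁ : ℝ)) := by
    rw [Finset.sum_comm]
    refine Finset.sum_congr rfl fun ℓ _ => ?_
    rw [← Finset.mul_sum, Finset.sum_range_sub (fun i => g (ℓ - 1) (a i)), ← ha0, ← ha2]
  have hsum4 : ∑ i ∈ Finset.range n,
      (((-1 : ℝ) ^ (s - 1) / s.factorial) * ∫ x in a i..a (i + 1), Q s (x - a i) * g s x)
      = ((-1 : ℝ) ^ (s - 1) / s.factorial) *
        ∫ x in (j₁ : ℝ)..(j₂ : ℝ), Q s (Int.fract x) * g s x := by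
    rw [← Finset.mul_sum]
    congr 1
    have : ∀ i ∈ Finset.range n, (∫ x in a i..a (i + 1), Q s (x - a i) * g s x)
        = ∫ x in a i..a (i + 1), Q s (Int.fract x) * g s x := fun i hi =>
      hfraceq i (Finset.mem_range.mp hi)
    rw [Finset.sum_congr rfl this,
      intervalIntegral.sum_integral_adjacent_intervals hQint, ← ha0, ← ha2]
  calc ∑ j ∈ Finset.Icc (j₁ + 1) j₂, f (j : ℝ)
      = ∑ i ∈ Finset.range n, f (a (i + 1)) := hsum1
    _ = ∑ i ∈ Finset.range n, ((∫ x in a i..a (i + 1), f x)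
          + (∑ ℓ ∈ Finset.Icc 1 s, (-1 : ℝ) ^ ℓ * ((bernoulli ℓ : ℝ) / ℓ.factorial) *
              (g (ℓ - 1) (a (i + 1)) - g (ℓ - 1) (a i)))
          + ((-1 : ℝ) ^ (s - 1) / s.factorial) * ∫ x in a i..a (i + 1), Q s (x - a i) * g s x) :=
        Finset.sum_congr rfl fun i hi => step i (Finset.mem_range.mp hi)
    _ = _ := by
        rw [Finset.sum_add_distrib, Finset.sum_add_distrib, hsum2, hsum3, hsum4]
        rfl
end
end

section
/- Locality of commutators: suppose F₁ = ∑_α F_{1,α} and F₂ = ∑_β F_{2,β} are operators on n qubits where each F_{i,α} acts nontrivially on at most k_i qubits and, for every qubit q, ∑_{α : supp(F_{i,α}) ∋ q} ‖F_{i,α}‖ ≤ J_i. Then [F₁, F₂] admits a decomposition into terms each supported on at most k₁ + k₂ − 1 qubits with, for every qubit q, the sum of norms of terms supported on q at most 2 J₁ J₂ (k₁ + k₂). -/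
noncomputable section

/-- The operator (spectral) norm of a complex matrix. -/
def opNorm {m : Type*} [Fintype m] [DecidableEq m] (X : Matrix m m ℂ) : ℝ :=
  ‖Matrix.toEuclideanCLM (𝕜 := ℂ) X‖

/-- An operator `X` on `n` qubits (acting on `(ℂ²)^{⊗n}`, realized as matrices indexed by
`Fin n → Fin 2`) is supported on the set of qubits `A` if it acts as the identity on the
qubits outside `A`. -/
def SupportedOn {n : ℕ} (A : Finset (Fin n))
    (X : Matrix (Fin n → Fin 2) (Fin n → Fin 2) ℂ) : Prop :=
  (∀ x y : Fin n → Fin 2, (∃ q ∉ A, x q ≠ y q) → X x y = 0) ∧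
  (∀ x x' y y' : Fin n → Fin 2, (∀ q ∈ A, x q = x' q) → (∀ q ∈ A, y q = y' q) →
    (∀ q ∉ A, x q = y q) → (∀ q ∉ A, x' q = y' q) → X x y = X x' y')

lemma opNorm_nonneg {m : Type*} [Fintype m] [DecidableEq m] (X : Matrix m m ℂ) :
    0 ≤ opNorm X := norm_nonneg _

lemma opNorm_comm_le {m : Type*} [Fintype m] [DecidableEq m] (X Y : Matrix m m ℂ) :
    opNorm (X * Y - Y * X) ≤ 2 * (opNorm X * opNorm Y) := by
  unfold opNorm
  rw [map_sub, map_mul, map_mul]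
  calc ‖_ - _‖ ≤ ‖Matrix.toEuclideanCLM (𝕜 := ℂ) X * Matrix.toEuclideanCLM (𝕜 := ℂ) Y‖
      + ‖Matrix.toEuclideanCLM (𝕜 := ℂ) Y * Matrix.toEuclideanCLM (𝕜 := ℂ) X‖ :=
        norm_sub_le _ _
    _ ≤ ‖Matrix.toEuclideanCLM (𝕜 := ℂ) X‖ * ‖Matrix.toEuclideanCLM (𝕜 := ℂ) Y‖
      + ‖Matrix.toEuclideanCLM (𝕜 := ℂ) Y‖ * ‖Matrix.toEuclideanCLM (𝕜 := ℂ) X‖ :=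
        add_le_add (norm_mul_le _ _) (norm_mul_le _ _)
    _ = 2 * (‖Matrix.toEuclideanCLM (𝕜 := ℂ) X‖ * ‖Matrix.toEuclideanCLM (𝕜 := ℂ) Y‖) := by
        ring

lemma supportedOn_zero {n : ℕ} (A : Finset (Fin n)) :
    SupportedOn A (0 : Matrix (Fin n → Fin 2) (Fin n → Fin 2) ℂ) := by
  constructor <;> intros <;> simp

lemma supportedOn_sub {n : ℕ} {A : Finset (Fin n)} {X Y}
    (hX : SupportedOn A X) (hY : SupportedOn A Y) : SupportedOn A (X - Y) := by
  refine ⟨fun x y h => ?_, fun x x' y y' h1 h2 h3 h4 => ?_⟩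
  · simp [Matrix.sub_apply, hX.1 x y h, hY.1 x y h]
  · simp [Matrix.sub_apply, hX.2 x x' y y' h1 h2 h3 h4, hY.2 x x' y y' h1 h2 h3 h4]

lemma supportedOn_mono {n : ℕ} {A B : Finset (Fin n)} (hAB : A ⊆ B) {X}
    (hX : SupportedOn A X) : SupportedOn B X := by
  obtain ⟨h1, h2⟩ := hX
  refine ⟨fun x y ⟨q, hq, hxy⟩ => h1 x y ⟨q, fun h => hq (hAB h), hxy⟩, ?_⟩
  intro x x' y y' hxx hyy hxy hx'y'
  by_cases h : ∀ q ∉ A, x q = y q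
  · refine h2 x x' y y' (fun q hq => hxx q (hAB hq)) (fun q hq => hyy q (hAB hq)) h ?_
    intro q hq
    by_cases hqB : q ∈ B
    · rw [← hxx q hqB, ← hyy q hqB]; exact h q hq
    · exact hx'y' q hqB
  · push_neg at h
    obtain ⟨q, hq, hne⟩ := h
    rw [h1 x y ⟨q, hq, hne⟩]
    by_cases hqB : q ∈ B
    · refine (h1 x' y' ⟨q, hq, ?_⟩).symm
      rw [← hxx q hqB, ← hyy q hqB]; exact hne
    · exact absurd (hxy q hqB) hne

lemma supportedOn_mul {n : ℕ} {A B : Finset (Fin n)} {X Y}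
    (hX : SupportedOn A X) (hY : SupportedOn B Y) : SupportedOn (A ∪ B) (X * Y) := by
  constructor
  · rintro x y ⟨q, hq, hxy⟩
    rw [Matrix.mul_apply]
    refine Finset.sum_eq_zero fun z _ => ?_
    by_cases hz : z q = x q
    · have : Y z y = 0 := hY.1 z y ⟨q, fun h => hq (Finset.mem_union_right _ h), hz ▸ hxy⟩
      rw [this, mul_zero]
    · have : X x z = 0 := hX.1 x z ⟨q, fun h => hq (Finset.mem_union_left _ h), fun h => hz h.symm⟩
      rw [this, zero_mul]
  · intro x x' y y' hxx hyy hxy hx'y'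
    rw [Matrix.mul_apply, Matrix.mul_apply]
    have hsub : ∀ (u : Fin n → Fin 2),
        (Finset.univ.filter (fun z : Fin n → Fin 2 => ∀ q ∉ A ∪ B, z q = u q)) ⊆ Finset.univ :=
      fun u => Finset.subset_univ _
    have hL : ∀ (u : Fin n → Fin 2) (f : (Fin n → Fin 2) → ℂ),
        (∀ z : Fin n → Fin 2, (∃ q ∉ A ∪ B, z q ≠ u q) → f z = 0) →
        ∑ z, f z = ∑ z ∈ Finset.univ.filter (fun z => ∀ q ∉ A ∪ B, z q = u q), f z := by
      intro u f hf
      refine (Finset.sum_subset (hsub u) ?_).symm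
      intro z _ hz
      simp only [Finset.mem_filter, Finset.mem_univ, true_and] at hz
      push_neg at hz
      exact hf z hz
    rw [hL x (fun z => X x z * Y z y) (fun z ⟨q, hq, hzx⟩ => by
      show X x z * Y z y = 0
      rw [hX.1 x z ⟨q, fun h => hq (Finset.mem_union_left _ h), fun h => hzx h.symm⟩, zero_mul]),
      hL x' (fun z => X x' z * Y z y') (fun z ⟨q, hq, hzx⟩ => by
      show X x' z * Y z y' = 0
      rw [hX.1 x' z ⟨q, fun h => hq (Finset.mem_union_left _ h), fun h => hzx h.symm⟩, zero_mul])]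
    refine Finset.sum_nbij' (fun z => fun q => if q ∈ A ∪ B then z q else x' q)
      (fun z => fun q => if q ∈ A ∪ B then z q else x q) ?_ ?_ ?_ ?_ ?_
    · intro z _
      simp only [Finset.mem_filter, Finset.mem_univ, true_and]
      intro q hq; simp [hq]
    · intro z _
      simp only [Finset.mem_filter, Finset.mem_univ, true_and]
      intro q hq; simp [hq]
    · intro z hz
      simp only [Finset.mem_filter, Finset.mem_univ, true_and] at hz
      funext q
      by_cases hq : q ∈ A ∪ B <;> simp [hq]
      exact (hz q hq).symm
    · intro z hz
      simp only [Finset.mem_filter, Finset.mem_univ, true_and] at hz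
      funext q
      by_cases hq : q ∈ A ∪ B <;> simp [hq]
      exact (hz q hq).symm
    · intro z hz
      simp only [Finset.mem_filter, Finset.mem_univ, true_and] at hz
      set z' : Fin n → Fin 2 := fun q => if q ∈ A ∪ B then z q else x' q with hz'
      have hzz' : ∀ q ∈ A ∪ B, z q = z' q := fun q hq => by simp only [hz']; rw [if_pos hq]
      have e1 : X x z = X x' z' := by
        by_cases hc : ∀ q ∉ A, z q = x q
        · refine hX.2 x x' z z' (fun q hq => hxx q (Finset.mem_union_left _ hq))
            (fun q hq => hzz' q (Finset.mem_union_left _ hq))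
            (fun q hq => (hc q hq).symm) ?_
          intro q hq
          by_cases hqB : q ∈ B
          · have hqAB : q ∈ A ∪ B := Finset.mem_union_right _ hqB
            rw [← hzz' q hqAB, hc q hq, hxx q hqAB]
          · simp [hz', Finset.mem_union, hq, hqB]
        · push_neg at hc
          obtain ⟨q, hq, hne⟩ := hc
          have hqAB : q ∈ A ∪ B := by
            by_contra hqn
            exact hne (hz q hqn)
          rw [hX.1 x z ⟨q, hq, fun h => hne h.symm⟩,
            hX.1 x' z' ⟨q, hq, ?_⟩]
          rw [← hxx q hqAB, ← hzz' q hqAB]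
          exact fun h => hne h.symm
      have e2 : Y z y = Y z' y' := by
        by_cases hc : ∀ q ∉ B, z q = y q
        · refine hY.2 z z' y y' (fun q hq => hzz' q (Finset.mem_union_right _ hq))
            (fun q hq => hyy q (Finset.mem_union_right _ hq)) hc ?_
          intro q hq
          by_cases hqA : q ∈ A
          · have hqAB : q ∈ A ∪ B := Finset.mem_union_left _ hqA
            rw [← hzz' q hqAB, hc q hq, hyy q hqAB]
          · have hqAB : q ∉ A ∪ B := by simp [Finset.mem_union, hqA, hq]
            simp only [hz', if_neg hqAB]
            exact hx'y' q hqAB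
        · push_neg at hc
          obtain ⟨q, hq, hne⟩ := hc
          have hqAB : q ∈ A ∪ B := by
            by_contra hqn
            exact hne ((hz q hqn).trans (hxy q hqn))
          rw [hY.1 z y ⟨q, hq, hne⟩, hY.1 z' y' ⟨q, hq, ?_⟩]
          rw [← hzz' q hqAB, ← hyy q hqAB]
          exact hne
      rw [e1, e2]

lemma mul_comm_of_disjoint {n : ℕ} {A B : Finset (Fin n)} {X Y}
    (hX : SupportedOn A X) (hY : SupportedOn B Y) (hAB : Disjoint A B) :
    X * Y = Y * X := by
  ext x y
  by_cases h : ∀ q ∉ A ∪ B, x q = y q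
  swap
  · push_neg at h
    obtain ⟨q, hq, hne⟩ := h
    rw [(supportedOn_mul hX hY).1 x y ⟨q, hq, hne⟩]
    rw [Finset.union_comm] at hq
    rw [(supportedOn_mul hY hX).1 x y ⟨q, hq, hne⟩]
  · set z₀ : Fin n → Fin 2 := fun q => if q ∈ A then y q else x q with hz₀
    set w₀ : Fin n → Fin 2 := fun q => if q ∈ B then y q else x q with hw₀
    have hXY : (X * Y) x y = X x z₀ * Y z₀ y := by
      rw [Matrix.mul_apply]
      refine Finset.sum_eq_single z₀ (fun z _ hz => ?_) (by simp)
      have : ∃ q, z q ≠ z₀ q := by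
        by_contra hc
        push_neg at hc
        exact hz (funext hc)
      obtain ⟨q, hq⟩ := this
      by_cases hqA : q ∈ A
      · have : Y z y = 0 := by
          refine hY.1 z y ⟨q, fun hB => (Finset.disjoint_left.mp hAB hqA) hB, ?_⟩
          simpa [hz₀, hqA] using hq
        rw [this, mul_zero]
      · have : X x z = 0 := by
          refine hX.1 x z ⟨q, hqA, fun he => hq ?_⟩
          simp [hz₀, hqA, ← he]
        rw [this, zero_mul]
    have hYX : (Y * X) x y = Y x w₀ * X w₀ y := by
      rw [Matrix.mul_apply]
      refine Finset.sum_eq_single w₀ (fun z _ hz => ?_) (by simp)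
      have : ∃ q, z q ≠ w₀ q := by
        by_contra hc
        push_neg at hc
        exact hz (funext hc)
      obtain ⟨q, hq⟩ := this
      by_cases hqB : q ∈ B
      · have : X z y = 0 := by
          refine hX.1 z y ⟨q, fun hA => (Finset.disjoint_left.mp hAB hA) hqB, ?_⟩
          simpa [hw₀, hqB] using hq
        rw [this, mul_zero]
      · have : Y x z = 0 := by
          refine hY.1 x z ⟨q, hqB, fun he => hq ?_⟩
          simp [hw₀, hqB, ← he]
        rw [this, zero_mul]
    rw [hXY, hYX]
    have e1 : X x z₀ = X w₀ y := by
      refine hX.2 x w₀ z₀ y ?_ ?_ ?_ ?_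
      · intro q hq
        simp [hw₀, Finset.disjoint_left.mp hAB hq]
      · intro q hq; simp [hz₀, hq]
      · intro q hq; simp [hz₀, hq]
      · intro q hq
        by_cases hqB : q ∈ B
        · simp [hw₀, hqB]
        · simp only [hw₀, if_neg hqB]
          exact h q (by simp [Finset.mem_union, hq, hqB])
    have e2 : Y z₀ y = Y x w₀ := by
      refine hY.2 z₀ x y w₀ ?_ ?_ ?_ ?_
      · intro q hq
        simp [hz₀, Finset.disjoint_right.mp hAB hq]
      · intro q hq; simp [hw₀, hq]
      · intro q hq
        by_cases hqA : q ∈ A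
        · simp [hz₀, hqA]
        · simp only [hz₀, if_neg hqA]
          exact h q (by simp [Finset.mem_union, hqA, hq])
      · intro q hq; simp [hw₀, hq]
    rw [e1, e2, mul_comm]

lemma pair_sum_bound {n : ℕ} {ι κ : Type*} [Fintype ι] [Fintype κ]
    (f : ι → ℝ) (g : κ → ℝ) (hf : ∀ a, 0 ≤ f a) (hg : ∀ b, 0 ≤ g b)
    (A : ι → Finset (Fin n)) (B : κ → Finset (Fin n))
    {k : ℕ} (hk : ∀ a, (A a).card ≤ k)
    {J J' : ℝ} (hJ'0 : 0 ≤ J')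
    (hJ : ∀ q : Fin n, ∑ a ∈ Finset.univ.filter (fun a => q ∈ A a), f a ≤ J)
    (hJ' : ∀ q : Fin n, ∑ b ∈ Finset.univ.filter (fun b => q ∈ B b), g b ≤ J')
    (q : Fin n) :
    ∑ p ∈ Finset.univ.filter (fun p : ι × κ => q ∈ A p.1 ∧ (A p.1 ∩ B p.2).Nonempty),
      f p.1 * g p.2 ≤ J * (k * J') := by
  classical
  rw [Finset.sum_filter, Fintype.sum_prod_type]
  have step1 : ∀ a : ι, ∑ b : κ, (if q ∈ A a ∧ (A a ∩ B b).Nonempty then f a * g b else 0)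
      ≤ (if q ∈ A a then f a else 0) * (k * J') := by
    intro a
    have inner : ∀ b : κ, (if q ∈ A a ∧ (A a ∩ B b).Nonempty then f a * g b else 0)
        ≤ (if q ∈ A a then f a else 0) * (∑ r ∈ A a, if r ∈ B b then g b else 0) := by
      intro b
      by_cases h : q ∈ A a ∧ (A a ∩ B b).Nonempty
      · rw [if_pos h, if_pos h.1]
        refine mul_le_mul_of_nonneg_left ?_ (hf a)
        obtain ⟨r, hr⟩ := h.2
        rw [Finset.mem_inter] at hr
        have := Finset.single_le_sum (f := fun r => if r ∈ B b then g b else 0)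
          (fun r _ => by split <;> simp [hg b]) hr.1
        simpa only [if_pos hr.2] using this
      · rw [if_neg h]
        exact mul_nonneg (by split <;> simp [hf a])
          (Finset.sum_nonneg fun r _ => by split <;> simp [hg b])
    calc ∑ b : κ, (if q ∈ A a ∧ (A a ∩ B b).Nonempty then f a * g b else 0)
        ≤ ∑ b : κ, (if q ∈ A a then f a else 0) * (∑ r ∈ A a, if r ∈ B b then g b else 0) :=
          Finset.sum_le_sum fun b _ => inner b
      _ = (if q ∈ A a then f a else 0) * ∑ b : κ, ∑ r ∈ A a, (if r ∈ B b then g b else 0) := by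
          rw [Finset.mul_sum]
      _ ≤ (if q ∈ A a then f a else 0) * (k * J') := by
          refine mul_le_mul_of_nonneg_left ?_ (by split <;> simp [hf a])
          rw [Finset.sum_comm]
          calc ∑ r ∈ A a, ∑ b : κ, (if r ∈ B b then g b else 0)
              ≤ ∑ _r ∈ A a, J' := by
                refine Finset.sum_le_sum fun r _ => ?_
                rw [← Finset.sum_filter]
                exact hJ' r
            _ = (A a).card * J' := by rw [Finset.sum_const, nsmul_eq_mul]
            _ ≤ k * J' := by
                refine mul_le_mul_of_nonneg_right ?_ hJ'0
                exact_mod_cast hk a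
  calc ∑ a : ι, ∑ b : κ, (if q ∈ A a ∧ (A a ∩ B b).Nonempty then f a * g b else 0)
      ≤ ∑ a : ι, (if q ∈ A a then f a else 0) * (k * J') :=
        Finset.sum_le_sum fun a _ => step1 a
    _ = (∑ a ∈ Finset.univ.filter (fun a => q ∈ A a), f a) * (k * J') := by
        rw [← Finset.sum_mul, Finset.sum_filter]
    _ ≤ J * (k * J') := by
        exact mul_le_mul_of_nonneg_right (hJ q) (mul_nonneg (Nat.cast_nonneg k) hJ'0)

/-- Locality of commutators: if `F₁ = ∑_α F_{1,α}` and `F₂ = ∑_β F_{2,β}` are `n`-qubit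
operators whose terms act on at most `k₁` resp. `k₂` qubits and whose per-qubit sums of
norms are at most `J₁` resp. `J₂`, then `[F₁, F₂]` decomposes into terms each supported on
at most `k₁ + k₂ − 1` qubits with per-qubit sums of norms at most `2 J₁ J₂ (k₁ + k₂)`. -/
theorem commutator_locality {n k₁ k₂ : ℕ} {J₁ J₂ : ℝ} (hJ₁ : 0 ≤ J₁) (hJ₂ : 0 ≤ J₂)
    {ι₁ ι₂ : Type*} [Fintype ι₁] [Fintype ι₂] [DecidableEq ι₁] [DecidableEq ι₂]
    (F₁ : ι₁ → Matrix (Fin n → Fin 2) (Fin n → Fin 2) ℂ)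
    (F₂ : ι₂ → Matrix (Fin n → Fin 2) (Fin n → Fin 2) ℂ)
    (A₁ : ι₁ → Finset (Fin n)) (A₂ : ι₂ → Finset (Fin n))
    (hsupp₁ : ∀ a, SupportedOn (A₁ a) (F₁ a)) (hsupp₂ : ∀ b, SupportedOn (A₂ b) (F₂ b))
    (hcard₁ : ∀ a, (A₁ a).card ≤ k₁) (hcard₂ : ∀ b, (A₂ b).card ≤ k₂)
    (hnorm₁ : ∀ q : Fin n, ∑ a ∈ Finset.univ.filter (fun a => q ∈ A₁ a), opNorm (F₁ a) ≤ J₁)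
    (hnorm₂ : ∀ q : Fin n, ∑ b ∈ Finset.univ.filter (fun b => q ∈ A₂ b), opNorm (F₂ b) ≤ J₂) :
    ∃ (G : ι₁ × ι₂ → Matrix (Fin n → Fin 2) (Fin n → Fin 2) ℂ)
      (B : ι₁ × ι₂ → Finset (Fin n)),
      ((∑ a, F₁ a) * (∑ b, F₂ b) - (∑ b, F₂ b) * (∑ a, F₁ a) = ∑ p, G p) ∧
      (∀ p, SupportedOn (B p) (G p) ∧ (B p).card ≤ k₁ + k₂ - 1) ∧
      (∀ q : Fin n, ∑ p ∈ Finset.univ.filter (fun p => q ∈ B p), opNorm (G p) ≤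
        2 * J₁ * J₂ * (k₁ + k₂)) := by
  classical
  refine ⟨fun p => if (A₁ p.1 ∩ A₂ p.2).Nonempty then F₁ p.1 * F₂ p.2 - F₂ p.2 * F₁ p.1 else 0,
    fun p => if (A₁ p.1 ∩ A₂ p.2).Nonempty then A₁ p.1 ∪ A₂ p.2 else ∅, ?_, ?_, ?_⟩
  · have h1 : ∀ p : ι₁ × ι₂,
        (if (A₁ p.1 ∩ A₂ p.2).Nonempty then F₁ p.1 * F₂ p.2 - F₂ p.2 * F₁ p.1 else 0)
        = F₁ p.1 * F₂ p.2 - F₂ p.2 * F₁ p.1 := by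
      intro p
      split
      · rfl
      · next h =>
        have hd : Disjoint (A₁ p.1) (A₂ p.2) := by
          rw [Finset.disjoint_iff_inter_eq_empty, ← Finset.not_nonempty_iff_eq_empty]
          exact h
        rw [mul_comm_of_disjoint (hsupp₁ p.1) (hsupp₂ p.2) hd, sub_self]
    simp only [h1]
    rw [Fintype.sum_prod_type]
    simp only [Finset.sum_sub_distrib, ← Finset.mul_sum, ← Finset.sum_mul]
  · intro p
    dsimp only
    by_cases h : (A₁ p.1 ∩ A₂ p.2).Nonempty
    · rw [if_pos h, if_pos h]
      constructor
      · exact supportedOn_sub (supportedOn_mul (hsupp₁ p.1) (hsupp₂ p.2))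
          (supportedOn_mono (le_of_eq (Finset.union_comm (A₂ p.2) (A₁ p.1)))
            (supportedOn_mul (hsupp₂ p.2) (hsupp₁ p.1)))
      · have hc := Finset.card_union_add_card_inter (A₁ p.1) (A₂ p.2)
        have h1 := Finset.Nonempty.card_pos h
        have h2 := hcard₁ p.1
        have h3 := hcard₂ p.2
        omega
    · rw [if_neg h, if_neg h]
      exact ⟨supportedOn_zero _, by simp⟩
  · intro q
    set T₁ := Finset.univ.filter
      (fun p : ι₁ × ι₂ => q ∈ A₁ p.1 ∧ (A₁ p.1 ∩ A₂ p.2).Nonempty) with hT₁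
    set T₂ := Finset.univ.filter
      (fun p : ι₁ × ι₂ => q ∈ A₂ p.2 ∧ (A₁ p.1 ∩ A₂ p.2).Nonempty) with hT₂
    have hfg : ∀ p : ι₁ × ι₂, 0 ≤ opNorm (F₁ p.1) * opNorm (F₂ p.2) :=
      fun p => mul_nonneg (opNorm_nonneg _) (opNorm_nonneg _)
    have hsub : Finset.univ.filter
        (fun p : ι₁ × ι₂ => q ∈ (if (A₁ p.1 ∩ A₂ p.2).Nonempty then A₁ p.1 ∪ A₂ p.2 else ∅))
        ⊆ T₁ ∪ T₂ := by
      intro p hp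
      simp only [Finset.mem_filter, Finset.mem_univ, true_and] at hp
      simp only [Finset.mem_union, hT₁, hT₂, Finset.mem_filter, Finset.mem_univ, true_and]
      by_cases h : (A₁ p.1 ∩ A₂ p.2).Nonempty
      · rw [if_pos h, Finset.mem_union] at hp
        rcases hp with h1 | h2
        · exact Or.inl ⟨h1, h⟩
        · exact Or.inr ⟨h2, h⟩
      · rw [if_neg h] at hp
        simp at hp
    have bound1 : ∑ p ∈ T₁, opNorm (F₁ p.1) * opNorm (F₂ p.2) ≤ J₁ * (k₁ * J₂) :=
      pair_sum_bound (fun a => opNorm (F₁ a)) (fun b => opNorm (F₂ b))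
        (fun a => opNorm_nonneg _) (fun b => opNorm_nonneg _) A₁ A₂ hcard₁ hJ₂ hnorm₁ hnorm₂ q
    have bound2 : ∑ p ∈ T₂, opNorm (F₁ p.1) * opNorm (F₂ p.2) ≤ J₂ * (k₂ * J₁) := by
      have hswap : ∑ p ∈ T₂, opNorm (F₁ p.1) * opNorm (F₂ p.2)
          = ∑ p ∈ Finset.univ.filter
              (fun p : ι₂ × ι₁ => q ∈ A₂ p.1 ∧ (A₂ p.1 ∩ A₁ p.2).Nonempty),
              opNorm (F₂ p.1) * opNorm (F₁ p.2) := by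
        refine Finset.sum_equiv (Equiv.prodComm ι₁ ι₂) ?_ ?_
        · intro p
          simp [hT₂, Finset.inter_comm, and_comm]
        · intro p _
          exact mul_comm _ _
      rw [hswap]
      exact pair_sum_bound (fun b => opNorm (F₂ b)) (fun a => opNorm (F₁ a))
        (fun b => opNorm_nonneg _) (fun a => opNorm_nonneg _) A₂ A₁ hcard₂ hJ₁ hnorm₂ hnorm₁ q
    calc ∑ p ∈ Finset.univ.filter
          (fun p : ι₁ × ι₂ => q ∈ (if (A₁ p.1 ∩ A₂ p.2).Nonempty then A₁ p.1 ∪ A₂ p.2 else ∅)),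
          opNorm (if (A₁ p.1 ∩ A₂ p.2).Nonempty then F₁ p.1 * F₂ p.2 - F₂ p.2 * F₁ p.1 else 0)
        ≤ ∑ p ∈ Finset.univ.filter
          (fun p : ι₁ × ι₂ => q ∈ (if (A₁ p.1 ∩ A₂ p.2).Nonempty then A₁ p.1 ∪ A₂ p.2 else ∅)),
          2 * (opNorm (F₁ p.1) * opNorm (F₂ p.2)) := by
          refine Finset.sum_le_sum fun p hp => ?_
          simp only [Finset.mem_filter, Finset.mem_univ, true_and] at hp
          by_cases h : (A₁ p.1 ∩ A₂ p.2).Nonempty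
          · rw [if_pos h]
            exact opNorm_comm_le _ _
          · rw [if_neg h] at hp
            exact absurd hp (by simp)
      _ ≤ ∑ p ∈ T₁ ∪ T₂, 2 * (opNorm (F₁ p.1) * opNorm (F₂ p.2)) :=
          Finset.sum_le_sum_of_subset_of_nonneg hsub
            (fun p _ _ => mul_nonneg (by norm_num) (hfg p))
      _ ≤ ∑ p ∈ T₁, 2 * (opNorm (F₁ p.1) * opNorm (F₂ p.2))
          + ∑ p ∈ T₂, 2 * (opNorm (F₁ p.1) * opNorm (F₂ p.2)) := by
          have h1 : (∑ p ∈ T₁ ∪ T₂, 2 * (opNorm (F₁ p.1) * opNorm (F₂ p.2)))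
              + ∑ p ∈ T₁ ∩ T₂, 2 * (opNorm (F₁ p.1) * opNorm (F₂ p.2))
              = (∑ p ∈ T₁, 2 * (opNorm (F₁ p.1) * opNorm (F₂ p.2)))
              + ∑ p ∈ T₂, 2 * (opNorm (F₁ p.1) * opNorm (F₂ p.2)) :=
            Finset.sum_union_inter
          have h2 : 0 ≤ ∑ p ∈ T₁ ∩ T₂, 2 * (opNorm (F₁ p.1) * opNorm (F₂ p.2)) :=
            Finset.sum_nonneg fun p _ => mul_nonneg (by norm_num) (hfg p)
          linarith
      _ = 2 * ((∑ p ∈ T₁, opNorm (F₁ p.1) * opNorm (F₂ p.2))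
          + ∑ p ∈ T₂, opNorm (F₁ p.1) * opNorm (F₂ p.2)) := by
          rw [← Finset.mul_sum, ← Finset.mul_sum, mul_add]
      _ ≤ 2 * (J₁ * (k₁ * J₂) + J₂ * (k₂ * J₁)) := by
          have := add_le_add bound1 bound2
          linarith
      _ = 2 * J₁ * J₂ * (k₁ + k₂) := by ring
end
end
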